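/- Let n ≥ 0 and d ≥ 1 be integers, and let p(x) = x^d + Σ_{i=1}^d a_{2i} x^{d−i} and r(x) = x^d + Σ_{i=1}^d b_{2i} x^{d−i} be monic real polynomials of degree d. Then the (n,d)-rectangular cumulants of their (n,d)-rectangular convolution satisfy K^{n,d}_{2ℓ}[p ⊞^n_d r] = K^{n,d}_{2ℓ}[p] + K^{n,d}_{2ℓ}[r] for all ℓ = 1, …, d. -/

import Mathlib

open Finset

/-- Pochhammer symbol `(v)_n = v (v+1) ⋯ (v+n-1)`. -/
noncomputable def pochEval (v : ℝ) (n : ℕ) : ℝ := (ascPochhammer ℝ n).eval v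

/-- Formal logarithm of a power series with constant term 1. -/
noncomputable def flog (F : PowerSeries ℝ) : PowerSeries ℝ :=
  PowerSeries.mk fun n =>
    ∑ k ∈ Finset.range n, (-1 : ℝ) ^ k * (PowerSeries.coeff (R := ℝ) n ((F - 1) ^ (k + 1))) / (k + 1)

/-- The `(n,d)`-rectangular finite free cumulants `K^{n,d}_{2ℓ}[p]` of a monic polynomial
`p(x) = x^d + Σ_{i=1}^d a_{2i} x^{d-i}` of degree `d`, given in terms of its coefficient
sequence (`a i` stands for `a_{2i}`):
`K^{n,d}_{2ℓ}[p] = ℓ·[z^{2ℓ}] log(1 + Σ_{i=1}^d (a_{2i}/((-d)_i (-d-n)_i)) z^{2i})`. -/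
noncomputable def rectCumulant (n d : ℕ) (a : ℕ → ℝ) (ℓ : ℕ) : ℝ :=
  (ℓ : ℝ) * PowerSeries.coeff (R := ℝ) (2 * ℓ) (flog (PowerSeries.mk fun j =>
    if j = 0 then 1
    else if j % 2 = 0 ∧ j / 2 ≤ d then
      a (j / 2) / (pochEval (-(d : ℝ)) (j / 2) * pochEval (-(d : ℝ) - (n : ℝ)) (j / 2))
    else 0))

/-- The coefficient sequence of the `(n,d)`-rectangular convolution `p ⊞^n_d r`:
`(p ⊞^n_d r)(x) = x^d + Σ_{k=1}^d c_{2k} x^{d-k}` with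
`c_{2k} = Σ_{i+j=k} [(d-i)!(d-j)!/(d!(d-k)!)]·[(n+d-i)!(n+d-j)!/((n+d)!(n+d-k)!)] a_{2i} b_{2j}`
(with `a_0 = b_0 = 1`; `a i` stands for `a_{2i}`). -/
noncomputable def rectConvCoeff (n d : ℕ) (a b : ℕ → ℝ) (k : ℕ) : ℝ :=
  ∑ i ∈ Finset.range (k + 1),
    (((d - i).factorial : ℝ) * ((d - (k - i)).factorial : ℝ) /
        ((d.factorial : ℝ) * ((d - k).factorial : ℝ))) *
      (((n + d - i).factorial : ℝ) * ((n + d - (k - i)).factorial : ℝ) /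
        (((n + d).factorial : ℝ) * ((n + d - k).factorial : ℝ))) *
      ((if i = 0 then 1 else a i) * (if k - i = 0 then 1 else b (k - i)))


section Aux
open PowerSeries



lemma coeff_flog (F : PowerSeries ℝ) (n : ℕ) : coeff (R := ℝ) n (flog F) =
    ∑ k ∈ Finset.range n, (-1 : ℝ) ^ k * (coeff (R := ℝ) n ((F - 1) ^ (k + 1))) / (k + 1) :=
  coeff_mk _ _

lemma coeff_pow_of_lt {u : ℝ⟦X⟧} (hu : constantCoeff (R := ℝ) u = 0) {m j : ℕ} (h : m < j) :
    coeff (R := ℝ) m (u ^ j) = 0 := by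
  have hd : (X : ℝ⟦X⟧) ^ j ∣ u ^ j := pow_dvd_pow_of_dvd (X_dvd_iff.mpr hu) j
  exact (X_pow_dvd_iff.mp hd) m h

lemma coeff_flog_eq_sum (F : ℝ⟦X⟧) (hF : constantCoeff (R := ℝ) F = 1) {m N : ℕ} (h : m ≤ N) :
    coeff (R := ℝ) m (flog F) =
      coeff (R := ℝ) m (∑ k ∈ range N, ((-1 : ℝ) ^ k / (k + 1)) • (F - 1) ^ (k + 1)) := by
  have hu : constantCoeff (R := ℝ) (F - 1) = 0 := by simp [hF]
  rw [coeff_flog, map_sum]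
  rw [Finset.sum_subset (Finset.range_subset_range.mpr h)]
  · apply Finset.sum_congr rfl
    intro k _
    rw [map_smul, smul_eq_mul]
    ring
  · intro k _ hk
    have : m < k + 1 := by simpa using Nat.lt_succ_of_le (by simpa using hk)
    rw [coeff_pow_of_lt hu this]
    simp

lemma flog_key (F : ℝ⟦X⟧) (hF : constantCoeff (R := ℝ) F = 1) :
    F * (d⁄dX ℝ (flog F)) = d⁄dX ℝ F := by
  ext j
  set u : ℝ⟦X⟧ := F - 1 with hu_def
  have hu : constantCoeff (R := ℝ) u = 0 := by simp [hu_def, hF]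
  have hFu : F = 1 + u := by ring
  set N : ℕ := j + 2 with hN
  set S : ℝ⟦X⟧ := ∑ k ∈ range N, ((-1 : ℝ) ^ k / (k + 1)) • u ^ (k + 1) with hS
  -- coefficients of d/dX flog F agree with those of d/dX S up to j
  have hDc : ∀ m ≤ j, coeff (R := ℝ) m (d⁄dX ℝ (flog F)) = coeff (R := ℝ) m (d⁄dX ℝ S) := by
    intro m hm
    rw [coeff_derivative, coeff_derivative, coeff_flog_eq_sum F hF (by omega : m + 1 ≤ N)]
  have h1 : coeff (R := ℝ) j (F * d⁄dX ℝ (flog F)) = coeff (R := ℝ) j (F * d⁄dX ℝ S) := by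
    rw [coeff_mul, coeff_mul]
    apply Finset.sum_congr rfl
    intro p hp
    have := Finset.HasAntidiagonal.mem_antidiagonal.mp hp
    rw [hDc p.2 (by omega)]
  -- compute d/dX S
  have hDS : d⁄dX ℝ S = (∑ k ∈ range N, (-u) ^ k) * d⁄dX ℝ u := by
    rw [hS, map_sum, Finset.sum_mul]
    apply Finset.sum_congr rfl
    intro k _
    rw [Derivation.map_smul, Derivation.leibniz_pow]
    simp only [Nat.add_sub_cancel, smul_eq_mul]
    have h2 : ((k:ℝ) + 1) ≠ 0 := by positivity
    have hneg : (-u) ^ k = ((-1 : ℝ) ^ k) • u ^ k := by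
      rw [neg_pow, smul_eq_C_mul, map_pow, map_neg, map_one]
    have h3 : ((-1:ℝ)^k/((k:ℝ)+1)) • ((k + 1) • (u ^ k * d⁄dX ℝ u)) =
        ((-1:ℝ)^k) • (u ^ k * d⁄dX ℝ u) := by
      rw [← Nat.cast_smul_eq_nsmul ℝ, smul_smul]
      congr 1
      push_cast
      field_simp
    rw [h3, hneg, smul_mul_assoc]
  have hgeom : F * (∑ k ∈ range N, (-u) ^ k) = 1 - (-u) ^ N := by
    have h := geom_sum_mul (-u) N
    have : F = -((-u) - 1) := by rw [hFu]; ring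
    rw [this]
    calc -((-u) - 1) * ∑ k ∈ range N, (-u) ^ k
        = -((∑ k ∈ range N, (-u) ^ k) * ((-u) - 1)) := by ring
      _ = -((-u) ^ N - 1) := by rw [h]
      _ = 1 - (-u) ^ N := by ring
  have hfds : F * d⁄dX ℝ S = (1 - (-u) ^ N) * d⁄dX ℝ u := by
    rw [hDS, ← mul_assoc, hgeom]
  rw [h1, hfds]
  have hDF : d⁄dX ℝ F = d⁄dX ℝ u := by
    rw [hFu, map_add, Derivation.map_one_eq_zero, zero_add]
  rw [hDF, sub_mul, one_mul, map_sub]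
  have hzero : coeff (R := ℝ) j ((-u) ^ N * d⁄dX ℝ u) = 0 := by
    have hnu : constantCoeff (R := ℝ) (-u) = 0 := by simp [hu]
    rw [coeff_mul]
    apply Finset.sum_eq_zero
    intro p hp
    have := Finset.HasAntidiagonal.mem_antidiagonal.mp hp
    rw [coeff_pow_of_lt hnu (by omega : p.1 < N), zero_mul]
  rw [hzero, sub_zero]

lemma coeff_flog_zero (F : ℝ⟦X⟧) : coeff (R := ℝ) 0 (flog F) = 0 := by
  rw [coeff_flog]; simp

lemma flog_mul (F G : ℝ⟦X⟧) (hF : constantCoeff (R := ℝ) F = 1) (hG : constantCoeff (R := ℝ) G = 1) :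
    flog (F * G) = flog F + flog G := by
  have hFG : constantCoeff (R := ℝ) (F * G) = 1 := by rw [map_mul, hF, hG, one_mul]
  have hne : F * G ≠ 0 := by
    intro h; rw [h, map_zero] at hFG; exact zero_ne_one hFG
  have key : (F * G) * (d⁄dX ℝ (flog (F * G))) = (F * G) * (d⁄dX ℝ (flog F) + d⁄dX ℝ (flog G)) := by
    rw [flog_key _ hFG, Derivation.leibniz]
    have h1 := flog_key F hF
    have h2 := flog_key G hG
    calc F • d⁄dX ℝ G + G • d⁄dX ℝ F
        = F * (G * d⁄dX ℝ (flog G)) + G * (F * d⁄dX ℝ (flog F)) := by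
          rw [h1, h2, smul_eq_mul, smul_eq_mul]
      _ = (F * G) * (d⁄dX ℝ (flog F) + d⁄dX ℝ (flog G)) := by ring
  have hD : d⁄dX ℝ (flog (F * G)) = d⁄dX ℝ (flog F) + d⁄dX ℝ (flog G) :=
    mul_left_cancel₀ hne key
  ext m
  cases m with
  | zero => rw [map_add, coeff_flog_zero, coeff_flog_zero, coeff_flog_zero, add_zero]
  | succ m =>
    have h4 := congrArg (coeff (R := ℝ) m) hD
    rw [map_add, coeff_derivative, coeff_derivative, coeff_derivative, ← add_mul] at h4
    have hm : ((m : ℝ) + 1) ≠ 0 := by positivity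
    rw [map_add]
    exact mul_right_cancel₀ hm h4

lemma coeff_pow_congr {F G : ℝ⟦X⟧} {m : ℕ} (h : ∀ i ≤ m, coeff (R := ℝ) i F = coeff (R := ℝ) i G) :
    ∀ j, ∀ i ≤ m, coeff (R := ℝ) i (F ^ j) = coeff (R := ℝ) i (G ^ j) := by
  intro j
  induction j with
  | zero => intro i _; rfl
  | succ j ih =>
    intro i hi
    rw [pow_succ, pow_succ, coeff_mul, coeff_mul]
    apply Finset.sum_congr rfl
    intro p hp
    have hpm := Finset.HasAntidiagonal.mem_antidiagonal.mp hp
    rw [ih p.1 (by omega), h p.2 (by omega)]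

lemma coeff_flog_congr {F G : ℝ⟦X⟧} {m : ℕ} (h : ∀ i ≤ m, coeff (R := ℝ) i F = coeff (R := ℝ) i G) :
    coeff (R := ℝ) m (flog F) = coeff (R := ℝ) m (flog G) := by
  rw [coeff_flog, coeff_flog]
  apply Finset.sum_congr rfl
  intro k _
  have h' : ∀ i ≤ m, coeff (R := ℝ) i (F - 1) = coeff (R := ℝ) i (G - 1) := by
    intro i hi; rw [map_sub, map_sub, h i hi]
  rw [coeff_pow_congr h' (k + 1) m le_rfl]



lemma pochEval_zero (v : ℝ) : pochEval v 0 = 1 := by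
  simp [pochEval, ascPochhammer]

lemma pochEval_succ (v : ℝ) (i : ℕ) : pochEval v (i + 1) = pochEval v i * (v + i) := by
  unfold pochEval
  rw [ascPochhammer_succ_right]
  simp

lemma pochEval_neg_nat (D : ℕ) : ∀ i, i ≤ D →
    pochEval (-(D : ℝ)) i = (-1) ^ i * (D.factorial : ℝ) / ((D - i).factorial : ℝ) := by
  intro i
  induction i with
  | zero =>
    intro _
    rw [pochEval_zero, pow_zero, one_mul, Nat.sub_zero, div_self (by positivity)]
  | succ i ih =>
    intro hi
    have hi' : i ≤ D := by omega
    rw [pochEval_succ, ih hi']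
    have hfac : ((D - i).factorial : ℝ) = ((D - i : ℕ) : ℝ) * ((D - (i+1)).factorial : ℝ) := by
      have h1 : D - i = (D - (i + 1)) + 1 := by omega
      rw [h1, Nat.factorial_succ]
      push_cast
      ring
    have hcast : -(D : ℝ) + i = -(((D - i : ℕ) : ℝ)) := by
      rw [Nat.cast_sub hi']; ring
    have hne1 : ((D - i).factorial : ℝ) ≠ 0 := by positivity
    have hne2 : ((D - (i+1)).factorial : ℝ) ≠ 0 := by positivity
    have hne3 : ((D - i : ℕ) : ℝ) ≠ 0 := by
      have : 0 < D - i := by omega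
      positivity
    rw [hcast, hfac, pow_succ]
    set c : ℝ := ((D - i : ℕ) : ℝ) with hc
    set e : ℝ := ((D - (i+1)).factorial : ℝ) with he
    field_simp

lemma pochEval_neg_ne_zero (D : ℕ) {i : ℕ} (h : i ≤ D) : pochEval (-(D : ℝ)) i ≠ 0 := by
  rw [pochEval_neg_nat D i h]
  apply div_ne_zero
  · exact mul_ne_zero (pow_ne_zero _ (by norm_num)) (by positivity)
  · positivity

lemma neg_sub_cast (n d : ℕ) : -(d : ℝ) - (n : ℝ) = -(((n + d : ℕ)) : ℝ) := by
  push_cast; ring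

lemma factor_eq (n d t s : ℕ) (h : t + s ≤ d) :
    ((((d - t).factorial : ℝ) * ((d - s).factorial : ℝ)) /
        ((d.factorial : ℝ) * ((d - (t + s)).factorial : ℝ))) *
      ((((n + d - t).factorial : ℝ) * ((n + d - s).factorial : ℝ)) /
        (((n + d).factorial : ℝ) * ((n + d - (t + s)).factorial : ℝ))) *
      ((pochEval (-(d : ℝ)) t * pochEval (-(d : ℝ) - (n : ℝ)) t) *
        (pochEval (-(d : ℝ)) s * pochEval (-(d : ℝ) - (n : ℝ)) s)) =
      pochEval (-(d : ℝ)) (t + s) * pochEval (-(d : ℝ) - (n : ℝ)) (t + s) := by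
  have ht : t ≤ d := by omega
  have hs : s ≤ d := by omega
  have ht' : t ≤ n + d := by omega
  have hs' : s ≤ n + d := by omega
  have hts' : t + s ≤ n + d := by omega
  rw [neg_sub_cast]
  rw [pochEval_neg_nat d t ht, pochEval_neg_nat d s hs, pochEval_neg_nat d (t+s) h,
    pochEval_neg_nat (n+d) t ht', pochEval_neg_nat (n+d) s hs', pochEval_neg_nat (n+d) (t+s) hts']
  have h1 : ((d - t).factorial : ℝ) ≠ 0 := by positivity
  have h2 : ((d - s).factorial : ℝ) ≠ 0 := by positivity
  have h3 : ((d - (t+s)).factorial : ℝ) ≠ 0 := by positivity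
  have h4 : ((d).factorial : ℝ) ≠ 0 := by positivity
  have h5 : ((n + d - t).factorial : ℝ) ≠ 0 := by positivity
  have h6 : ((n + d - s).factorial : ℝ) ≠ 0 := by positivity
  have h7 : ((n + d - (t+s)).factorial : ℝ) ≠ 0 := by positivity
  have h8 : ((n + d).factorial : ℝ) ≠ 0 := by positivity
  rw [pow_add]
  field_simp

lemma factor_eq' (n d t k : ℕ) (ht : t ≤ k) (h : k ≤ d) :
    ((((d - t).factorial : ℝ) * ((d - (k - t)).factorial : ℝ)) /
        ((d.factorial : ℝ) * ((d - k).factorial : ℝ))) *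
      ((((n + d - t).factorial : ℝ) * ((n + d - (k - t)).factorial : ℝ)) /
        (((n + d).factorial : ℝ) * ((n + d - k).factorial : ℝ))) *
      ((pochEval (-(d : ℝ)) t * pochEval (-(d : ℝ) - (n : ℝ)) t) *
        (pochEval (-(d : ℝ)) (k - t) * pochEval (-(d : ℝ) - (n : ℝ)) (k - t))) =
      pochEval (-(d : ℝ)) k * pochEval (-(d : ℝ) - (n : ℝ)) k := by
  have h0 := factor_eq n d t (k - t) (by omega)
  rw [show t + (k - t) = k from by omega] at h0
  exact h0

lemma sum_range_even (g : ℕ → ℝ) (hodd : ∀ p, p % 2 = 1 → g p = 0) (k : ℕ) :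
    ∑ p ∈ range (2 * k + 1), g p = ∑ t ∈ range (k + 1), g (2 * t) := by
  induction k with
  | zero => simp
  | succ k ih =>
    have h1 : 2 * (k + 1) + 1 = (2 * k + 1) + 1 + 1 := by omega
    rw [h1, Finset.sum_range_succ, Finset.sum_range_succ, ih,
      hodd (2 * k + 1) (by omega), Finset.sum_range_succ]
    rw [show 2 * k + 1 + 1 = 2 * (k + 1) from by omega,
      Finset.sum_range_succ (fun t => g (2 * t)) (k + 1), Finset.sum_range_succ]
    ring



noncomputable def Fser (n d : ℕ) (a : ℕ → ℝ) : ℝ⟦X⟧ :=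
  PowerSeries.mk fun j =>
    if j = 0 then 1
    else if j % 2 = 0 ∧ j / 2 ≤ d then
      a (j / 2) / (pochEval (-(d : ℝ)) (j / 2) * pochEval (-(d : ℝ) - (n : ℝ)) (j / 2))
    else 0

lemma Fser_const (n d : ℕ) (a : ℕ → ℝ) : constantCoeff (R := ℝ) (Fser n d a) = 1 := by
  rw [Fser, constantCoeff_mk]; simp

lemma Fser_odd (n d : ℕ) (a : ℕ → ℝ) {m : ℕ} (hm : m % 2 = 1) :
    coeff (R := ℝ) m (Fser n d a) = 0 := by
  rw [Fser, coeff_mk]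
  rw [if_neg (by omega), if_neg (by omega)]

lemma Pfun_zero (n d : ℕ) : pochEval (-(d : ℝ)) 0 * pochEval (-(d : ℝ) - (n : ℝ)) 0 = 1 := by
  rw [pochEval_zero, pochEval_zero]; norm_num

lemma Pfun_ne_zero (n d : ℕ) {i : ℕ} (hi : i ≤ d) :
    pochEval (-(d : ℝ)) i * pochEval (-(d : ℝ) - (n : ℝ)) i ≠ 0 := by
  apply mul_ne_zero (pochEval_neg_ne_zero d hi)
  rw [neg_sub_cast]
  exact pochEval_neg_ne_zero (n + d) (by omega)

lemma Fser_even (n d : ℕ) (a : ℕ → ℝ) {t : ℕ} (ht : t ≤ d) :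
    coeff (R := ℝ) (2 * t) (Fser n d a) =
      (if t = 0 then 1 else a t) /
        (pochEval (-(d : ℝ)) t * pochEval (-(d : ℝ) - (n : ℝ)) t) := by
  rw [Fser, coeff_mk]
  rcases Nat.eq_zero_or_pos t with h0 | hpos
  · subst h0
    rw [if_pos rfl, if_pos rfl, Pfun_zero, div_one]
  · rw [if_neg (by omega), if_pos ⟨by omega, by omega⟩]
    rw [show 2 * t / 2 = t from by omega, if_neg (by omega)]

lemma coeff_conv_eq (n d : ℕ) (a b : ℕ → ℝ) {m : ℕ} (hm : m ≤ 2 * d) :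
    coeff (R := ℝ) m (Fser n d (rectConvCoeff n d a b)) =
      coeff (R := ℝ) m (Fser n d a * Fser n d b) := by
  rcases Nat.even_or_odd m with ⟨k, hk⟩ | ⟨k, hk⟩
  swap
  · -- odd case
    rw [Fser_odd n d _ (by omega), coeff_mul]
    symm
    apply Finset.sum_eq_zero
    intro p hp
    have hps := Finset.HasAntidiagonal.mem_antidiagonal.mp hp
    rcases Nat.even_or_odd p.1 with ⟨x, hx⟩ | ⟨x, hx⟩
    · have : p.2 % 2 = 1 := by omega
      rw [Fser_odd n d b this, mul_zero]
    · have : p.1 % 2 = 1 := by omega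
      rw [Fser_odd n d a this, zero_mul]
  · -- even case, m = 2k
    have hkd : k ≤ d := by omega
    have hm2 : m = 2 * k := by omega
    subst hm2
    rw [coeff_mul, Finset.Nat.sum_antidiagonal_eq_sum_range_succ_mk]
    have hodd' : ∀ p, p % 2 = 1 →
        coeff (R := ℝ) p (Fser n d a) * coeff (R := ℝ) (2 * k - p) (Fser n d b) = 0 := fun p hp => by
      rw [Fser_odd n d a hp, zero_mul]
    rw [sum_range_even _ hodd' k]
    have hstep : ∀ t ∈ range (k + 1),
        coeff (R := ℝ) (2 * t) (Fser n d a) * coeff (R := ℝ) (2 * k - 2 * t) (Fser n d b) =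
        ((if t = 0 then 1 else a t) /
          (pochEval (-(d : ℝ)) t * pochEval (-(d : ℝ) - (n : ℝ)) t)) *
        ((if k - t = 0 then 1 else b (k - t)) /
          (pochEval (-(d : ℝ)) (k - t) * pochEval (-(d : ℝ) - (n : ℝ)) (k - t))) := by
      intro t htmem
      have htk : t ≤ k := by simpa using Nat.lt_succ_iff.mp (Finset.mem_range.mp htmem)
      rw [show 2 * k - 2 * t = 2 * (k - t) from by omega,
        Fser_even n d a (by omega), Fser_even n d b (by omega)]
    rw [Finset.sum_congr rfl hstep]
    rw [Fser_even n d (rectConvCoeff n d a b) hkd]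
    rcases Nat.eq_zero_or_pos k with h0 | hkpos
    · subst h0
      simp [rectConvCoeff, Pfun_zero]
    rw [if_neg (by omega), rectConvCoeff, Finset.sum_div]
    apply Finset.sum_congr rfl
    intro i himem
    have hik : i ≤ k := by simpa using Nat.lt_succ_iff.mp (Finset.mem_range.mp himem)
    have hfe := factor_eq' n d i k hik hkd
    have hPk := Pfun_ne_zero n d hkd
    have hPi := Pfun_ne_zero n d (show i ≤ d by omega)
    have hPki := Pfun_ne_zero n d (show k - i ≤ d by omega)
    rw [div_mul_div_comm ((if i = 0 then (1:ℝ) else a i))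
      (pochEval (-(d:ℝ)) i * pochEval (-(d:ℝ) - (n:ℝ)) i)
      ((if k - i = 0 then (1:ℝ) else b (k - i)))
      (pochEval (-(d:ℝ)) (k - i) * pochEval (-(d:ℝ) - (n:ℝ)) (k - i)),
      div_eq_div_iff hPk (mul_ne_zero hPi hPki)]
    linear_combination ((if i = 0 then (1:ℝ) else a i) * (if k - i = 0 then (1:ℝ) else b (k - i))) * hfe


lemma rectCumulant_eq (n d : ℕ) (a : ℕ → ℝ) (ℓ : ℕ) :
    rectCumulant n d a ℓ = (ℓ : ℝ) * coeff (R := ℝ) (2 * ℓ) (flog (Fser n d a)) := rfl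

end Aux

open PowerSeries in
/-- Theorem 4.7: the `(n,d)`-rectangular cumulants linearize the `(n,d)`-rectangular
convolution:  `K^{n,d}_{2ℓ}[p ⊞^n_d r] = K^{n,d}_{2ℓ}[p] + K^{n,d}_{2ℓ}[r]`, `ℓ = 1,…,d`. -/
theorem rectangular_cumulants_linearize (n d : ℕ) (hd : 1 ≤ d) (a b : ℕ → ℝ) :
    ∀ ℓ : ℕ, 1 ≤ ℓ → ℓ ≤ d →
      rectCumulant n d (rectConvCoeff n d a b) ℓ =
        rectCumulant n d a ℓ + rectCumulant n d b ℓ := by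
  intro ℓ h1 h2
  rw [rectCumulant_eq, rectCumulant_eq, rectCumulant_eq]
  have hcong : PowerSeries.coeff (R := ℝ) (2*ℓ) (flog (Fser n d (rectConvCoeff n d a b))) =
      PowerSeries.coeff (R := ℝ) (2*ℓ) (flog (Fser n d a * Fser n d b)) :=
    coeff_flog_congr (fun i hi => coeff_conv_eq n d a b (by omega))
  rw [hcong, flog_mul _ _ (Fser_const n d a) (Fser_const n d b), map_add]
  ring
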